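/- arXiv:0803.0090 — 2 statements merged into one kernel-verified Lean document; each statement's English description precedes it below -/
import Mathlib

section
/- In the additive group A = ZMod 22 × ZMod 16 × ZMod 4 × ZMod 2, the element (0,0,0,1) does not lie in the subgroup generated by the ten elements (10,0,0,0), (0,13,3,0), (0,0,2,0), (19,0,0,1), (1,0,3,0), (1,13,0,0), (1,0,0,1), (19,0,1,0), (21,1,0,0), (0,12,0,0). -/
private def f : (ZMod 22 × ZMod 16 × ZMod 4 × ZMod 2) →+ ZMod 2 where
  toFun x := ZMod.castHom (by norm_num : (2:ℕ) ∣ 22) (ZMod 2) x.1 +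
    ZMod.castHom (by norm_num : (2:ℕ) ∣ 16) (ZMod 2) x.2.1 +
    ZMod.castHom (by norm_num : (2:ℕ) ∣ 4) (ZMod 2) x.2.2.1 + x.2.2.2
  map_zero' := by simp
  map_add' x y := by simp only [Prod.fst_add, Prod.snd_add, map_add]; ring

theorem target_not_in_subgroup_generated_by_images :
    (0, 0, 0, 1) ∉ AddSubgroup.closure
      ({(10, 0, 0, 0), (0, 13, 3, 0), (0, 0, 2, 0), (19, 0, 0, 1), (1, 0, 3, 0),
        (1, 13, 0, 0), (1, 0, 0, 1), (19, 0, 1, 0), (21, 1, 0, 0), (0, 12, 0, 0)} :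
        Set (ZMod 22 × ZMod 16 × ZMod 4 × ZMod 2)) := by
  intro h
  have h0 : ∀ x ∈ AddSubgroup.closure
      ({(10, 0, 0, 0), (0, 13, 3, 0), (0, 0, 2, 0), (19, 0, 0, 1), (1, 0, 3, 0),
        (1, 13, 0, 0), (1, 0, 0, 1), (19, 0, 1, 0), (21, 1, 0, 0), (0, 12, 0, 0)} :
        Set (ZMod 22 × ZMod 16 × ZMod 4 × ZMod 2)), f x = 0 := by
    intro z hz
    induction hz using AddSubgroup.closure_induction with
    | mem x hx =>
      simp only [Set.mem_insert_iff, Set.mem_singleton_iff] at hx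
      rcases hx with h|h|h|h|h|h|h|h|h|h <;> subst h <;> decide
    | zero => exact map_zero f
    | add x y _ _ hx hy => rw [map_add, hx, hy, add_zero]
    | neg x _ hx => rw [map_neg, hx, neg_zero]
  exact absurd (h0 _ h) (by decide)
end

section
/- The additive group homomorphism from Z^10 to ZMod 22 × ZMod 16 × ZMod 4 × ZMod 2 sending the i-th standard basis vector (for i = 1,...,10) to the elements (10,0,0,0), (0,13,3,0), (0,0,2,0), (19,0,0,1), (1,0,3,0), (1,13,0,0), (1,0,0,1), (19,0,1,0), (21,1,0,0), (0,12,0,0), respectively, is not surjective. -/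
/-- The mod-2 invariant `(a,b,c,d) ↦ a + b + c + d (mod 2)`. -/
def g22 : (ZMod 22 × ZMod 16 × ZMod 4 × ZMod 2) →+ ZMod 2 where
  toFun p := ZMod.castHom (show (2:ℕ) ∣ 22 by norm_num) (ZMod 2) p.1 +
    ZMod.castHom (show (2:ℕ) ∣ 16 by norm_num) (ZMod 2) p.2.1 +
    ZMod.castHom (show (2:ℕ) ∣ 4 by norm_num) (ZMod 2) p.2.2.1 + p.2.2.2
  map_zero' := by simp
  map_add' := by intro x y; simp only [Prod.fst_add, Prod.snd_add, map_add]; ring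

theorem hom_from_Z10_not_surjective
    (f : (Fin 10 → ℤ) →+ (ZMod 22 × ZMod 16 × ZMod 4 × ZMod 2))
    (hf : ∀ i : Fin 10, f (Pi.single i 1) =
      ![(10, 0, 0, 0), (0, 13, 3, 0), (0, 0, 2, 0), (19, 0, 0, 1), (1, 0, 3, 0),
        (1, 13, 0, 0), (1, 0, 0, 1), (19, 0, 1, 0), (21, 1, 0, 0), (0, 12, 0, 0)] i) :
    ¬ Function.Surjective f := by
  intro hs
  obtain ⟨x, hx⟩ := hs (1, 0, 0, 0)
  have hgen : ∀ i : Fin 10, g22 (f (Pi.single i 1)) = 0 := by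
    intro i; rw [hf]
    fin_cases i <;> simp [g22, map_ofNat] <;> decide
  have hzero : g22 (f x) = 0 := by
    have hxe : x = ∑ i : Fin 10, x i • Pi.single i (1 : ℤ) := by
      funext j
      simp [Finset.sum_apply, Pi.single_apply, Finset.sum_ite_eq', mul_comm]
    rw [hxe, map_sum, map_sum]
    refine Finset.sum_eq_zero fun i _ => ?_
    rw [map_zsmul, map_zsmul, hgen i, smul_zero]
  rw [hx] at hzero
  simp only [g22, AddMonoidHom.coe_mk, ZeroHom.coe_mk, map_one, map_zero, add_zero, zero_add] at hzero
  exact one_ne_zero hzero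
end
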